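/- The compact metric space X = {0} ∪ {1/k : k ≥ 1}, with the metric induced from ℝ, satisfies dim_N X = 1; in particular its Nagata dimension strictly exceeds its topological dimension, which is 0. -/

import Mathlib

open Metric Set

/-- `X` has Nagata dimension at most `n` (witnessed by some constant `c > 0`):
for every `s > 0` there is a covering by sets of diameter `≤ c * s` such that every
set of diameter `≤ s` meets at most `n + 1` members of the covering. -/
def NagataProp (X : Type*) [MetricSpace X] (n : ℕ) : Prop :=
  ∃ c : ℝ, 0 < c ∧ ∀ s : ℝ, 0 < s → ∃ 𝓑 : Set (Set X),
    (⋃₀ 𝓑 = univ) ∧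
    (∀ B ∈ 𝓑, EMetric.diam B ≤ ENNReal.ofReal (c * s)) ∧
    (∀ E : Set X, EMetric.diam E ≤ ENNReal.ofReal s →
      ∃ T : Finset (Set X), T.card ≤ n + 1 ∧
        ∀ B ∈ 𝓑, (B ∩ E).Nonempty → B ∈ T)

/-- The Nagata (Assouad–Nagata) dimension of a metric space, as an element of `ℕ∞`. -/
noncomputable def nagataDim (X : Type*) [MetricSpace X] : ℕ∞ :=
  sInf {k : ℕ∞ | ∃ n : ℕ, k = n ∧ NagataProp X n}

/-- The covering (topological) dimension of a topological space, as an element of `ℕ∞`: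
the least `n` such that every open cover has an open refinement in which every point
lies in at most `n + 1` members. -/
noncomputable def covDim (X : Type*) [TopologicalSpace X] : ℕ∞ :=
  sInf {k : ℕ∞ | ∃ n : ℕ, k = n ∧
    ∀ U : Set (Set X), (∀ u ∈ U, IsOpen u) → ⋃₀ U = univ →
      ∃ V : Set (Set X), (∀ v ∈ V, IsOpen v) ∧ ⋃₀ V = univ ∧
        (∀ v ∈ V, ∃ u ∈ U, v ⊆ u) ∧
        ∀ x : X, ∃ T : Finset (Set X), T.card ≤ n + 1 ∧ ∀ v ∈ V, x ∈ v → v ∈ T}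

namespace HarmonicSeqAux

abbrev Xh : Type := {x : ℝ // x = 0 ∨ ∃ k : ℕ, 1 ≤ k ∧ x = 1 / k}

lemma val_nonneg (x : Xh) : 0 ≤ x.val := by
  rcases x.2 with h | ⟨k, hk, h⟩ <;> rw [h] <;> positivity

lemma dist_eq (x y : Xh) : dist x y = |x.val - y.val| := by
  rw [Subtype.dist_eq, Real.dist_eq]

lemma harm_ineq {j k : ℕ} (hj : 1 ≤ j) (hjk : j < k) :
    1/((k:ℝ)*(k+1)) ≤ 1/(j:ℝ) - 1/(k:ℝ) := by
  have hjp : (0:ℝ) < j := by exact_mod_cast hj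
  have h1 : (j:ℝ) + 1 ≤ k := by exact_mod_cast hjk
  have hkp : (0:ℝ) < k := by linarith
  rw [div_sub_div _ _ hjp.ne' hkp.ne', div_le_div_iff₀ (by positivity) (by positivity)]
  nlinarith [mul_pos hjp hkp, mul_pos hkp hkp]

lemma harm_sep {j k : ℕ} (hj : 1 ≤ j) (hk : 1 ≤ k) (hne : j ≠ k) :
    1/((k:ℝ)*(k+1)) ≤ |1/(j:ℝ) - 1/(k:ℝ)| := by
  have hkp : (0:ℝ) < k := by exact_mod_cast hk
  rcases lt_or_gt_of_ne hne with h | h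
  · calc 1/((k:ℝ)*(k+1)) ≤ 1/(j:ℝ) - 1/(k:ℝ) := harm_ineq hj h
      _ ≤ |1/(j:ℝ) - 1/(k:ℝ)| := le_abs_self _
  · have h1 : 1/((k:ℝ)*(k+1)) ≤ 1/(k:ℝ) - 1/(j:ℝ) := by
      have := harm_ineq hk h
      have hjp : (0:ℝ) < j := by
        have : (0:ℕ) < j := lt_trans hk h
        exact_mod_cast this
      have hkj : (k:ℝ) + 1 ≤ j := by exact_mod_cast h
      have h2 : 1/(j:ℝ) ≤ 1/((k:ℝ)+1) := by
        apply one_div_le_one_div_of_le (by linarith) hkj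
      have h3 : 1/(k:ℝ) - 1/((k:ℝ)+1) = 1/((k:ℝ)*(k+1)) := by
        field_simp; ring
      linarith
  -- |1/j - 1/k| = 1/k - 1/j here
    calc 1/((k:ℝ)*(k+1)) ≤ 1/(k:ℝ) - 1/(j:ℝ) := h1
      _ ≤ |1/(j:ℝ) - 1/(k:ℝ)| := by rw [abs_sub_comm]; exact le_abs_self _

/-- Points of `Xh`. -/
noncomputable def pt (k : ℕ) (hk : 1 ≤ k) : Xh := ⟨1/(k:ℝ), Or.inr ⟨k, hk, rfl⟩⟩

def z : Xh := ⟨0, Or.inl rfl⟩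

lemma isolated (x : Xh) (hx : 0 < x.val) : IsOpen ({x} : Set Xh) := by
  rcases x.2 with h | ⟨k, hk, h⟩
  · rw [h] at hx; exact absurd hx (lt_irrefl 0)
  have hkp : (0:ℝ) < k := by exact_mod_cast hk
  rw [Metric.isOpen_singleton_iff]
  refine ⟨1/((k:ℝ)*(k+1)), by positivity, fun y hy => ?_⟩
  rw [dist_eq, h] at hy
  rcases y.2 with h' | ⟨j, hj, h'⟩
  · rw [h'] at hy
    have : |0 - 1/(k:ℝ)| = 1/(k:ℝ) := by
      rw [zero_sub, abs_neg, abs_of_pos (by positivity)]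
    rw [this] at hy
    have : 1/((k:ℝ)*(k+1)) ≤ 1/(k:ℝ) := by
      apply one_div_le_one_div_of_le hkp; nlinarith
    linarith
  · rw [h'] at hy
    by_cases hjk : j = k
    · apply Subtype.ext; rw [h', h, hjk]
    · exact absurd hy (not_lt.mpr (harm_sep hj hk hjk))


lemma propA : NagataProp Xh 1 := by
  classical
  refine ⟨1, one_pos, fun s hs => ?_⟩
  set Bj : ℕ → Set Xh := fun j => {x : Xh | (j:ℝ)*s ≤ x.val ∧ x.val < ((j:ℝ)+1)*s} with hBj
  refine ⟨Set.range Bj, ?_, ?_, ?_⟩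
  · apply Set.eq_univ_of_forall
    intro x
    refine ⟨Bj ⌊x.val / s⌋₊, ⟨_, rfl⟩, ?_, ?_⟩
    · have h1 : (⌊x.val / s⌋₊ : ℝ) ≤ x.val / s := Nat.floor_le (div_nonneg (val_nonneg x) hs.le)
      calc (⌊x.val / s⌋₊ : ℝ) * s ≤ (x.val / s) * s := by nlinarith
        _ = x.val := by field_simp
    · have h2 : x.val / s < (⌊x.val / s⌋₊ : ℝ) + 1 := Nat.lt_floor_add_one _
      calc x.val = (x.val / s) * s := by field_simp
        _ < ((⌊x.val / s⌋₊ : ℝ) + 1) * s := by nlinarith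
  · rintro B ⟨j, rfl⟩
    apply EMetric.diam_le
    intro x hx y hy
    rw [edist_dist]
    apply ENNReal.ofReal_le_ofReal
    rw [dist_eq, one_mul, abs_sub_le_iff]
    obtain ⟨ha, hb⟩ := hx
    obtain ⟨hc, hd⟩ := hy
    constructor <;> linarith
  · intro E hE
    set J : Set ℕ := {j | (Bj j ∩ E).Nonempty} with hJdef
    by_cases hJ : J.Nonempty
    · set j₀ := sInf J with hj0
      refine ⟨{Bj j₀, Bj (j₀+1)}, ?_, ?_⟩
      · exact le_trans (Finset.card_insert_le _ _) (by simp)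
      · rintro B ⟨j, rfl⟩ hBE
        have hjJ : j ∈ J := hBE
        have hle : j₀ ≤ j := Nat.sInf_le hjJ
        have hub : j ≤ j₀ + 1 := by
          by_contra hcon
          push_neg at hcon
          obtain ⟨x, hxB, hxE⟩ := hBE
          obtain ⟨y, hyB, hyE⟩ := Nat.sInf_mem hJ
          have hdist : dist x y ≤ s := by
            have h := (EMetric.edist_le_diam_of_mem hxE hyE).trans hE
            rw [edist_dist] at h
            exact (ENNReal.ofReal_le_ofReal_iff hs.le).mp h
          have h1 : ((j₀:ℝ)+2) * s ≤ (j:ℝ) * s := by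
            have : (j₀:ℝ) + 2 ≤ j := by exact_mod_cast hcon
            nlinarith
          have h2 : x.val - y.val ≤ dist x y := by
            rw [dist_eq]; exact le_abs_self _
          have := hxB.1
          have := hyB.2
          nlinarith
        have : j = j₀ ∨ j = j₀ + 1 := by omega
        rcases this with rfl | rfl
        · exact Finset.mem_insert_self _ _
        · exact Finset.mem_insert_of_mem (Finset.mem_singleton_self _)
    · refine ⟨∅, by simp, ?_⟩
      rintro B ⟨j, rfl⟩ hBE
      exact absurd ⟨j, hBE⟩ hJ


lemma propB : ¬ NagataProp Xh 0 := by
  rintro ⟨c, hc, H⟩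
  set K : ℕ := ⌈c⌉₊ + 1 with hKdef
  have hK1 : 1 ≤ K := le_add_self
  have hcK : c < K := by
    calc c ≤ (⌈c⌉₊ : ℝ) := Nat.le_ceil c
      _ < K := by exact_mod_cast Nat.lt_succ_self _
  have hKp : (0:ℝ) < K := by exact_mod_cast hK1
  set s : ℝ := 1/((K:ℝ)*(K+1)) with hsdef
  have hs : 0 < s := by positivity
  obtain ⟨𝓑, hcov, hdiam, hmult⟩ := H s hs
  -- key: points at distance ≤ s lie in a single common member
  have key : ∀ x y : Xh, dist x y ≤ s → ∀ B ∈ 𝓑, ∀ B' ∈ 𝓑, x ∈ B → y ∈ B' → B = B' := by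
    intro x y hxy B hB B' hB' hxB hyB'
    have hdiamE : EMetric.diam ({x, y} : Set Xh) ≤ ENNReal.ofReal s := by
      rw [show EMetric.diam ({x, y} : Set Xh) = edist x y from EMetric.diam_pair, edist_dist]
      exact ENNReal.ofReal_le_ofReal hxy
    obtain ⟨T, hT1, hT2⟩ := hmult _ hdiamE
    have h1 : B ∈ T := hT2 B hB ⟨x, hxB, Or.inl rfl⟩
    have h2 : B' ∈ T := hT2 B' hB' ⟨y, hyB', Or.inr rfl⟩
    exact Finset.card_le_one.mp (by simpa using hT1) B h1 B' h2
  have memu : ∀ x : Xh, ∃ B ∈ 𝓑, x ∈ B := by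
    intro x
    have : x ∈ ⋃₀ 𝓑 := hcov ▸ mem_univ x
    simpa using this
  obtain ⟨B, hB, hzB⟩ := memu z
  set M : ℕ := K * (K + 1) with hMdef
  have hM1 : 1 ≤ M := Nat.one_le_iff_ne_zero.mpr (by positivity)
  have hMcast : (M:ℝ) = (K:ℝ)*(K+1) := by push_cast [hMdef]; ring
  -- 1/M is in B
  have hMB : pt M hM1 ∈ B := by
    obtain ⟨B', hB', hmB'⟩ := memu (pt M hM1)
    have hd : dist (pt M hM1) z ≤ s := by
      rw [dist_eq]
      show |1/(M:ℝ) - 0| ≤ s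
      rw [sub_zero, abs_of_pos (by positivity), hsdef, hMcast]
    have := key _ _ hd B' hB' B hB hmB' hzB
    exact this ▸ hmB'
  -- downward chain: all pt k for K ≤ k ≤ M are in B
  have chain : ∀ d : ℕ, ∀ k : ℕ, k + d = M → K ≤ k → ∀ hk : 1 ≤ k, pt k hk ∈ B := by
    intro d
    induction d with
    | zero =>
      intro k hkM _ hk
      have hkM' : k = M := by omega
      subst hkM'
      exact hMB
    | succ n ih =>
      intro k hkM hKk hk
      have hk1 : 1 ≤ k + 1 := by omega
      have hprev : pt (k+1) hk1 ∈ B := ih (k+1) (by omega) (by omega) hk1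
      obtain ⟨B', hB', hmB'⟩ := memu (pt k hk)
      have hd : dist (pt k hk) (pt (k+1) hk1) ≤ s := by
        rw [dist_eq]
        show |1/(k:ℝ) - 1/((k+1:ℕ):ℝ)| ≤ s
        have hkp : (0:ℝ) < k := by exact_mod_cast hk
        have h1 : ((k:ℕ):ℝ) < ((k+1:ℕ):ℝ) := by exact_mod_cast Nat.lt_succ_self k
        have habs : |1/(k:ℝ) - 1/((k+1:ℕ):ℝ)| = 1/(k:ℝ) - 1/((k+1:ℕ):ℝ) := by
          apply abs_of_nonneg
          have : 1/((k+1:ℕ):ℝ) ≤ 1/(k:ℝ) := one_div_le_one_div_of_le hkp h1.le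
          linarith
        rw [habs]
        push_cast
        have heq : 1/(k:ℝ) - 1/((k:ℝ)+1) = 1/((k:ℝ)*((k:ℝ)+1)) := by field_simp; ring
        rw [heq, hsdef]
        apply one_div_le_one_div_of_le (by positivity)
        have hKk' : (K:ℝ) ≤ k := by exact_mod_cast hKk
        nlinarith
      have := key _ _ hd B' hB' B hB hmB' hprev
      exact this ▸ hmB'
  have hKM : K ≤ M := by
    calc K = K * 1 := (Nat.mul_one K).symm
      _ ≤ K * (K + 1) := Nat.mul_le_mul_left K (by omega)
  have hKB : pt K hK1 ∈ B := chain (M - K) K (by omega) le_rfl hK1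
  -- diameter contradiction
  have hd := (EMetric.edist_le_diam_of_mem hzB hKB).trans (hdiam B hB)
  rw [edist_dist, dist_eq] at hd
  have hdz : |z.val - (pt K hK1).val| = 1/(K:ℝ) := by
    show |0 - 1/(K:ℝ)| = 1/(K:ℝ)
    rw [zero_sub, abs_neg, abs_of_pos (by positivity)]
  rw [hdz] at hd
  have hfin : 1/(K:ℝ) ≤ c * s :=
    (ENNReal.ofReal_le_ofReal_iff (by positivity)).mp hd
  rw [hsdef] at hfin
  have : (K:ℝ) + 1 ≤ c := by
    have h2 : c * (1/((K:ℝ)*(K+1))) = c / ((K:ℝ)*(K+1)) := by ring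
    rw [h2, div_le_div_iff₀ hKp (by positivity)] at hfin
    nlinarith
  linarith


lemma covProp : ∀ U : Set (Set Xh), (∀ u ∈ U, IsOpen u) → ⋃₀ U = univ →
    ∃ V : Set (Set Xh), (∀ v ∈ V, IsOpen v) ∧ ⋃₀ V = univ ∧
      (∀ v ∈ V, ∃ u ∈ U, v ⊆ u) ∧
      ∀ x : Xh, ∃ T : Finset (Set Xh), T.card ≤ 0 + 1 ∧ ∀ v ∈ V, x ∈ v → v ∈ T := by
  classical
  intro U hUopen hUcov
  have hz : ∃ u ∈ U, z ∈ u := by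
    have : z ∈ ⋃₀ U := hUcov ▸ mem_univ z
    simpa using this
  obtain ⟨u₀, hu₀U, hzu₀⟩ := hz
  obtain ⟨ε, hε, hball⟩ := Metric.isOpen_iff.mp (hUopen u₀ hu₀U) z hzu₀
  set v₀ : Set Xh := ball z ε with hv₀
  set V : Set (Set Xh) := insert v₀ {v | ∃ x : Xh, ε ≤ x.val ∧ v = {x}} with hV
  have memv₀ : ∀ x : Xh, x ∈ v₀ ↔ x.val < ε := by
    intro x
    rw [hv₀, mem_ball, dist_eq]
    show |x.val - 0| < ε ↔ _
    rw [sub_zero, abs_of_nonneg (val_nonneg x)]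
  refine ⟨V, ?_, ?_, ?_, ?_⟩
  · rintro v (rfl | ⟨x, hx, rfl⟩)
    · exact isOpen_ball
    · exact isolated x (lt_of_lt_of_le hε hx)
  · apply eq_univ_of_forall
    intro x
    by_cases hx : x.val < ε
    · exact ⟨v₀, Or.inl rfl, (memv₀ x).mpr hx⟩
    · exact ⟨{x}, Or.inr ⟨x, not_lt.mp hx, rfl⟩, rfl⟩
  · rintro v (rfl | ⟨x, hx, rfl⟩)
    · exact ⟨u₀, hu₀U, hball⟩
    · have : x ∈ ⋃₀ U := hUcov ▸ mem_univ x
      obtain ⟨u, hu, hxu⟩ := this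
      exact ⟨u, hu, singleton_subset_iff.mpr hxu⟩
  · intro x
    by_cases hx : x.val < ε
    · refine ⟨{v₀}, by simp, ?_⟩
      rintro v (rfl | ⟨y, hy, rfl⟩) hxv
      · exact Finset.mem_singleton_self _
      · rw [mem_singleton_iff] at hxv
        subst hxv
        exact absurd hy (not_le.mpr hx)
    · refine ⟨{({x} : Set Xh)}, by simp, ?_⟩
      rintro v (rfl | ⟨y, hy, rfl⟩) hxv
      · exact absurd ((memv₀ x).mp hxv) hx
      · rw [mem_singleton_iff] at hxv
        subst hxv
        exact Finset.mem_singleton_self _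

end HarmonicSeqAux

theorem nagataDim_harmonic_sequence :
    nagataDim {x : ℝ // x = 0 ∨ ∃ k : ℕ, 1 ≤ k ∧ x = 1 / k} = 1 ∧
    covDim {x : ℝ // x = 0 ∨ ∃ k : ℕ, 1 ≤ k ∧ x = 1 / k} = 0 := by
  constructor
  · apply le_antisymm
    · exact sInf_le ⟨1, Nat.cast_one.symm, HarmonicSeqAux.propA⟩
    · apply le_sInf
      rintro k ⟨n, rfl, hn⟩
      have hn0 : n ≠ 0 := fun h => HarmonicSeqAux.propB (h ▸ hn)
      exact_mod_cast Nat.one_le_iff_ne_zero.mpr hn0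
  · apply le_antisymm
    · exact sInf_le ⟨0, Nat.cast_zero.symm, HarmonicSeqAux.covProp⟩
    · exact zero_le
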